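/- Assume α < (2^{1/(2N)} − 1)/L, so that C_l := (1+αL)^{2N} − 1 < 1, and assume the bounded-variance condition ∫_I ‖∇lᵢ(w) − ∇l(w)‖² dμ(i) ≤ σ² for every w ∈ ℝ^d, where ∇l(w) = ∫_I ∇lᵢ(w) dμ(i). Then for every w ∈ ℝ^d, ‖∇l(w)‖ ≤ (1/(1 − C_l)) ‖∇𝓛(w)‖ + (C_l/(1 − C_l)) σ, where ∇𝓛(w) = ∫_I Gᵢ(w) dμ(i). -/

import Mathlib

open MeasureTheory

noncomputable def innerPath {d : ℕ} (α : ℝ) (l : EuclideanSpace ℝ (Fin d) → ℝ) :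
    ℕ → EuclideanSpace ℝ (Fin d) → EuclideanSpace ℝ (Fin d)
  | 0, w => w
  | j + 1, w => innerPath α l j w - α • gradient l (innerPath α l j w)

noncomputable def hessProd {d : ℕ} (α : ℝ) (N : ℕ)
    (lS : EuclideanSpace ℝ (Fin d) → ℝ) (w : EuclideanSpace ℝ (Fin d)) :
    EuclideanSpace ℝ (Fin d) →L[ℝ] EuclideanSpace ℝ (Fin d) :=
  ((List.range N).map fun j =>
    ContinuousLinearMap.id ℝ (EuclideanSpace ℝ (Fin d)) -
      α • fderiv ℝ (gradient lS) (innerPath α lS j w)).prod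

noncomputable def metaGrad {d : ℕ} (α : ℝ) (N : ℕ)
    (lS lT : EuclideanSpace ℝ (Fin d) → ℝ) (w : EuclideanSpace ℝ (Fin d)) :
    EuclideanSpace ℝ (Fin d) :=
  hessProd α N lS w (gradient lT (innerPath α lS N w))

variable {d : ℕ}

lemma prod_sub_one_norm {E : Type*} [NormedAddCommGroup E] [NormedSpace ℝ E]
    (lst : List (E →L[ℝ] E)) (ε : ℝ) (hε : 0 ≤ ε)
    (h : ∀ b ∈ lst, ‖b - 1‖ ≤ ε) :
    ‖lst.prod - 1‖ ≤ (1 + ε) ^ lst.length - 1 := by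
  induction lst with
  | nil => simp
  | cons b t ih =>
    have ht := ih (fun x hx => h x (List.mem_cons_of_mem _ hx))
    have hb := h b (List.mem_cons_self)
    have hnt : ‖t.prod‖ ≤ (1 + ε) ^ t.length := by
      calc ‖t.prod‖ = ‖(t.prod - 1) + 1‖ := by rw [sub_add_cancel]
        _ ≤ ‖t.prod - 1‖ + ‖(1 : E →L[ℝ] E)‖ := norm_add_le _ _
        _ ≤ ((1 + ε) ^ t.length - 1) + 1 :=
          add_le_add ht ContinuousLinearMap.norm_id_le
        _ = (1 + ε) ^ t.length := by ring
    have key : (b :: t).prod - 1 = (b - 1) * t.prod + (t.prod - 1) := by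
      rw [List.prod_cons, sub_mul, one_mul]; abel
    calc ‖(b :: t).prod - 1‖ = ‖(b - 1) * t.prod + (t.prod - 1)‖ := by rw [key]
      _ ≤ ‖(b - 1) * t.prod‖ + ‖t.prod - 1‖ := norm_add_le _ _
      _ ≤ ‖b - 1‖ * ‖t.prod‖ + ((1 + ε) ^ t.length - 1) := add_le_add (norm_mul_le _ _) ht
      _ ≤ ε * (1 + ε) ^ t.length + ((1 + ε) ^ t.length - 1) := by
          have := mul_le_mul hb hnt (norm_nonneg _) hε
          linarith
      _ = (1 + ε) ^ (b :: t).length - 1 := by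
          simp [List.length_cons, pow_succ]; ring

section Path
variable (α L : ℝ) (f : EuclideanSpace ℝ (Fin d) → ℝ)
  (hα : 0 ≤ α) (hL : 0 ≤ L)
  (hgrad : ∀ w u, ‖gradient f w - gradient f u‖ ≤ L * ‖w - u‖)
  (w : EuclideanSpace ℝ (Fin d))

include hα hL hgrad

lemma grad_path_norm (j : ℕ) :
    ‖gradient f (innerPath α f j w)‖ ≤ (1 + α * L) ^ j * ‖gradient f w‖ := by
  induction j with
  | zero => simp [innerPath]
  | succ j ih =>
    have hc : (0:ℝ) ≤ 1 + α * L := by positivity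
    have step : ‖gradient f (innerPath α f (j+1) w)‖ ≤
        (1 + α * L) * ‖gradient f (innerPath α f j w)‖ := by
      have h1 := hgrad (innerPath α f (j+1) w) (innerPath α f j w)
      have h2 : innerPath α f (j+1) w - innerPath α f j w
          = -(α • gradient f (innerPath α f j w)) := by
        simp [innerPath]
      rw [h2] at h1
      rw [norm_neg, norm_smul, Real.norm_of_nonneg hα] at h1
      calc ‖gradient f (innerPath α f (j+1) w)‖
          ≤ ‖gradient f (innerPath α f (j+1) w) - gradient f (innerPath α f j w)‖
            + ‖gradient f (innerPath α f j w)‖ := by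
            simpa using norm_add_le (gradient f (innerPath α f (j+1) w)
              - gradient f (innerPath α f j w)) (gradient f (innerPath α f j w))
        _ ≤ L * (α * ‖gradient f (innerPath α f j w)‖)
            + ‖gradient f (innerPath α f j w)‖ := by linarith
        _ = (1 + α * L) * ‖gradient f (innerPath α f j w)‖ := by ring
    calc ‖gradient f (innerPath α f (j+1) w)‖
        ≤ (1 + α * L) * ‖gradient f (innerPath α f j w)‖ := step
      _ ≤ (1 + α * L) * ((1 + α * L) ^ j * ‖gradient f w‖) := by
          exact mul_le_mul_of_nonneg_left ih hc
      _ = (1 + α * L) ^ (j+1) * ‖gradient f w‖ := by ring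

lemma path_dist (j : ℕ) :
    ‖innerPath α f j w - w‖ ≤
      α * (∑ k ∈ Finset.range j, (1 + α * L) ^ k) * ‖gradient f w‖ := by
  induction j with
  | zero => simp [innerPath]
  | succ j ih =>
    have hgp := grad_path_norm α L f hα hL hgrad w j
    have h2 : innerPath α f (j+1) w - w
        = (innerPath α f j w - w) - α • gradient f (innerPath α f j w) := by
      simp [innerPath]; abel
    calc ‖innerPath α f (j+1) w - w‖
        ≤ ‖innerPath α f j w - w‖ + ‖α • gradient f (innerPath α f j w)‖ := by
          rw [h2]; exact norm_sub_le _ _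
      _ ≤ α * (∑ k ∈ Finset.range j, (1 + α * L) ^ k) * ‖gradient f w‖
          + α * ((1 + α * L) ^ j * ‖gradient f w‖) := by
          rw [norm_smul, Real.norm_of_nonneg hα]
          exact add_le_add ih (mul_le_mul_of_nonneg_left hgp hα)
      _ = α * (∑ k ∈ Finset.range (j+1), (1 + α * L) ^ k) * ‖gradient f w‖ := by
          rw [Finset.sum_range_succ]; ring

end Path

section Point
variable (α L : ℝ) (f : EuclideanSpace ℝ (Fin d) → ℝ)
  (hα : 0 ≤ α) (hL : 0 ≤ L)
  (hgrad : ∀ w u : EuclideanSpace ℝ (Fin d), ‖gradient f w - gradient f u‖ ≤ L * ‖w - u‖)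
  (w : EuclideanSpace ℝ (Fin d)) (N : ℕ)

include hα hL hgrad

lemma hessProd_sub_one_norm :
    ‖hessProd α N f w - 1‖ ≤ (1 + α * L) ^ N - 1 := by
  have hlip : LipschitzWith ⟨L, hL⟩ (gradient f) :=
    LipschitzWith.of_dist_le_mul fun x y => by
      rw [dist_eq_norm, dist_eq_norm]; exact hgrad x y
  have key : ∀ b ∈ (List.range N).map (fun j =>
      ContinuousLinearMap.id ℝ (EuclideanSpace ℝ (Fin d)) -
        α • fderiv ℝ (gradient f) (innerPath α f j w)), ‖b - 1‖ ≤ α * L := by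
    intro b hb
    obtain ⟨j, _, rfl⟩ := List.mem_map.1 hb
    have hH : ‖fderiv ℝ (gradient f) (innerPath α f j w)‖ ≤ L :=
      norm_fderiv_le_of_lipschitz ℝ hlip
    have : ContinuousLinearMap.id ℝ (EuclideanSpace ℝ (Fin d)) -
        α • fderiv ℝ (gradient f) (innerPath α f j w) - 1
        = -(α • fderiv ℝ (gradient f) (innerPath α f j w)) := by
      rw [ContinuousLinearMap.one_def]; abel
    rw [this, norm_neg]
    calc ‖α • fderiv ℝ (gradient f) (innerPath α f j w)‖
        ≤ ‖α‖ * ‖fderiv ℝ (gradient f) (innerPath α f j w)‖ :=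
          ContinuousLinearMap.opNorm_smul_le _ _
      _ ≤ α * L := by
          rw [Real.norm_of_nonneg hα]
          exact mul_le_mul_of_nonneg_left hH hα
  have := prod_sub_one_norm _ (α * L) (by positivity) key
  simpa only [hessProd, List.length_map, List.length_range] using this

lemma hessProd_norm : ‖hessProd α N f w‖ ≤ (1 + α * L) ^ N := by
  calc ‖hessProd α N f w‖ = ‖(hessProd α N f w - 1) + 1‖ := by rw [sub_add_cancel]
    _ ≤ ‖hessProd α N f w - 1‖ +
        ‖(1 : EuclideanSpace ℝ (Fin d) →L[ℝ] EuclideanSpace ℝ (Fin d))‖ := norm_add_le _ _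
    _ ≤ ((1 + α * L) ^ N - 1) + 1 :=
        add_le_add (hessProd_sub_one_norm α L f hα hL hgrad w N)
          ContinuousLinearMap.norm_id_le
    _ = (1 + α * L) ^ N := by ring

lemma metaGrad_close :
    ‖metaGrad α N f f w - gradient f w‖ ≤
      ((1 + α * L) ^ (2 * N) - 1) * ‖gradient f w‖ := by
  set c := 1 + α * L with hc
  have hc1 : (1:ℝ) ≤ c := by simp [hc]; positivity
  have hcN : (1:ℝ) ≤ c ^ N := one_le_pow₀ hc1
  have hP1 := hessProd_sub_one_norm α L f hα hL hgrad w N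
  have hP := hessProd_norm α L f hα hL hgrad w N
  have hdist := path_dist α L f hα hL hgrad w N
  have hgN : ‖gradient f (innerPath α f N w) - gradient f w‖ ≤ (c ^ N - 1) * ‖gradient f w‖ := by
    have h1 := hgrad (innerPath α f N w) w
    have h2 : L * (α * (∑ k ∈ Finset.range N, c ^ k) * ‖gradient f w‖)
        = (c ^ N - 1) * ‖gradient f w‖ := by
      have hgs := geom_sum_mul c N
      have hc' : c - 1 = α * L := by rw [hc]; ring
      rw [hc'] at hgs
      linear_combination ‖gradient f w‖ * hgs
    calc ‖gradient f (innerPath α f N w) - gradient f w‖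
        ≤ L * ‖innerPath α f N w - w‖ := h1
      _ ≤ L * (α * (∑ k ∈ Finset.range N, c ^ k) * ‖gradient f w‖) :=
          mul_le_mul_of_nonneg_left hdist hL
      _ = (c ^ N - 1) * ‖gradient f w‖ := h2
  have hdecomp : metaGrad α N f f w - gradient f w
      = hessProd α N f w (gradient f (innerPath α f N w) - gradient f w)
        + (hessProd α N f w - 1) (gradient f w) := by
    simp only [metaGrad, map_sub, ContinuousLinearMap.sub_apply, ContinuousLinearMap.one_apply]
    abel
  have hgnn : (0:ℝ) ≤ ‖gradient f w‖ := norm_nonneg _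
  calc ‖metaGrad α N f f w - gradient f w‖
      ≤ ‖hessProd α N f w (gradient f (innerPath α f N w) - gradient f w)‖
        + ‖(hessProd α N f w - 1) (gradient f w)‖ := by rw [hdecomp]; exact norm_add_le _ _
    _ ≤ ‖hessProd α N f w‖ * ‖gradient f (innerPath α f N w) - gradient f w‖
        + ‖hessProd α N f w - 1‖ * ‖gradient f w‖ :=
        add_le_add (ContinuousLinearMap.le_opNorm _ _) (ContinuousLinearMap.le_opNorm _ _)
    _ ≤ c ^ N * ((c ^ N - 1) * ‖gradient f w‖) + (c ^ N - 1) * ‖gradient f w‖ := by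
        have h3 := mul_le_mul hP hgN (norm_nonneg _) (by positivity)
        have h4 := mul_le_mul_of_nonneg_right hP1 hgnn
        linarith
    _ = (c ^ (2 * N) - 1) * ‖gradient f w‖ := by
        rw [two_mul, pow_add]; ring

end Point

theorem stmt10 {d : ℕ} (hd : 1 ≤ d) (α L σ : ℝ) (hα : 0 < α) (hL : 0 < L) (hσ : 0 < σ)
    (N : ℕ) (hN : 1 ≤ N)
    (hαsmall : α < ((2 : ℝ) ^ ((1 : ℝ) / (2 * (N : ℝ))) - 1) / L)
    {I : Type*} [MeasurableSpace I] (μ : Measure I) [IsProbabilityMeasure μ]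
    (l : I → EuclideanSpace ℝ (Fin d) → ℝ)
    (hl : ∀ i, ContDiff ℝ 2 (l i))
    (hgrad : ∀ i, ∀ w u : EuclideanSpace ℝ (Fin d),
      ‖gradient (l i) w - gradient (l i) u‖ ≤ L * ‖w - u‖)
    (hgint : ∀ w : EuclideanSpace ℝ (Fin d), Integrable (fun i => gradient (l i) w) μ)
    (hg2int : ∀ w : EuclideanSpace ℝ (Fin d), Integrable (fun i => ‖gradient (l i) w‖ ^ 2) μ)
    (hGint : ∀ w : EuclideanSpace ℝ (Fin d),
      Integrable (fun i => metaGrad α N (l i) (l i) w) μ)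
    (hvar : ∀ w : EuclideanSpace ℝ (Fin d),
      (∫ i, ‖gradient (l i) w - ∫ i', gradient (l i') w ∂μ‖ ^ 2 ∂μ) ≤ σ ^ 2) :
    ∀ w : EuclideanSpace ℝ (Fin d),
      ‖∫ i, gradient (l i) w ∂μ‖ ≤
        (1 / (1 - ((1 + α * L) ^ (2 * N) - 1))) *
            ‖∫ i, metaGrad α N (l i) (l i) w ∂μ‖ +
          (((1 + α * L) ^ (2 * N) - 1) / (1 - ((1 + α * L) ^ (2 * N) - 1))) * σ := by
  intro w
  set C : ℝ := (1 + α * L) ^ (2 * N) - 1 with hCdef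
  have hc1 : (1:ℝ) ≤ 1 + α * L := by nlinarith
  have hC0 : 0 ≤ C := by
    have := one_le_pow₀ (n := 2 * N) hc1
    simp only [hCdef]; linarith
  -- C < 1
  have hC1 : C < 1 := by
    have h2N : (0:ℝ) < 2 * (N:ℝ) := by positivity
    have hαL : α * L < (2 : ℝ) ^ ((1 : ℝ) / (2 * (N : ℝ))) - 1 := by
      have := (lt_div_iff₀ hL).1 hαsmall
      linarith
    have hlt : 1 + α * L < (2 : ℝ) ^ ((1 : ℝ) / (2 * (N : ℝ))) := by linarith
    have hpow : (1 + α * L) ^ (2 * N) < ((2 : ℝ) ^ ((1 : ℝ) / (2 * (N : ℝ)))) ^ (2 * N) := by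
      apply pow_lt_pow_left₀ hlt (by linarith) (by omega)
    have heq : ((2 : ℝ) ^ ((1 : ℝ) / (2 * (N : ℝ)))) ^ (2 * N) = 2 := by
      rw [← Real.rpow_natCast ((2 : ℝ) ^ ((1 : ℝ) / (2 * (N : ℝ)))) (2 * N),
        ← Real.rpow_mul (by norm_num)]
      rw [show ((2 * N : ℕ) : ℝ) = 2 * (N : ℝ) by push_cast; ring]
      rw [one_div, inv_mul_cancel₀ (ne_of_gt h2N), Real.rpow_one]
    simp only [hCdef]
    linarith [hpow.trans_eq heq]
  have hCpos : 0 < 1 - C := by linarith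
  set g : I → EuclideanSpace ℝ (Fin d) := fun i => gradient (l i) w with hg
  set Gbar : EuclideanSpace ℝ (Fin d) := ∫ i, g i ∂μ with hGbar
  set M : EuclideanSpace ℝ (Fin d) := ∫ i, metaGrad α N (l i) (l i) w ∂μ with hM
  -- pointwise bound
  have hptwise : ∀ i, ‖g i - metaGrad α N (l i) (l i) w‖ ≤ C * ‖g i‖ := by
    intro i
    rw [norm_sub_rev]
    exact metaGrad_close α L (l i) hα.le hL.le (hgrad i) w N
  -- integrability facts
  have hgm : AEStronglyMeasurable (fun i => g i - Gbar) μ :=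
    (hgint w).aestronglyMeasurable.sub aestronglyMeasurable_const
  have hsq_int : Integrable (fun i => ‖g i - Gbar‖ ^ 2) μ := by
    have hbound : Integrable (fun i => ‖g i‖ ^ 2 + 2 * ‖Gbar‖ * ‖g i‖ + ‖Gbar‖ ^ 2) μ :=
      (((hg2int w).add (((hgint w).norm.const_mul (2 * ‖Gbar‖)))).add (integrable_const _))
    refine hbound.mono' (hgm.norm.pow 2) ?_
    filter_upwards with i
    have h1 : ‖g i - Gbar‖ ≤ ‖g i‖ + ‖Gbar‖ := norm_sub_le _ _
    have h2 : (0:ℝ) ≤ ‖g i - Gbar‖ := norm_nonneg _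
    rw [Real.norm_of_nonneg (by positivity)]
    nlinarith [norm_nonneg (g i), norm_nonneg Gbar]
  -- Cauchy-Schwarz: ∫ ‖g i - Gbar‖ ≤ σ
  have hCS : (∫ i, ‖g i - Gbar‖ ∂μ) ≤ σ := by
    have hmem : MemLp (fun i => ‖g i - Gbar‖) (ENNReal.ofReal 2) μ := by
      rw [show ENNReal.ofReal 2 = 2 by norm_num]
      exact (memLp_two_iff_integrable_sq hgm.norm).2 hsq_int
    have hmem1 : MemLp (fun _ : I => (1:ℝ)) (ENNReal.ofReal 2) μ := memLp_const 1
    have hconj : Real.HolderConjugate 2 2 := Real.holderConjugate_iff.mpr ⟨one_lt_two, by norm_num⟩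
    have hH := integral_mul_le_Lp_mul_Lq_of_nonneg hconj
      (Filter.Eventually.of_forall fun i => norm_nonneg (g i - Gbar))
      (Filter.Eventually.of_forall fun _ => zero_le_one) hmem hmem1
    simp only [mul_one] at hH
    have hrw : (∫ i, ‖g i - Gbar‖ ^ (2:ℝ) ∂μ) = ∫ i, ‖g i - Gbar‖ ^ 2 ∂μ := by
      congr 1; funext i
      rw [← Real.rpow_natCast ‖g i - Gbar‖ 2]; norm_num
    have hone : (∫ _ : I, (1:ℝ) ^ (2:ℝ) ∂μ) = 1 := by
      simp
    rw [hrw, hone] at hH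
    have hnn : (0:ℝ) ≤ ∫ i, ‖g i - Gbar‖ ^ 2 ∂μ :=
      integral_nonneg fun i => by positivity
    calc (∫ i, ‖g i - Gbar‖ ∂μ)
        ≤ (∫ i, ‖g i - Gbar‖ ^ 2 ∂μ) ^ ((1:ℝ)/2) * 1 ^ ((1:ℝ)/2) := hH
      _ ≤ (σ ^ 2) ^ ((1:ℝ)/2) * 1 ^ ((1:ℝ)/2) := by
          gcongr
          exact hvar w
      _ = σ := by
          rw [Real.one_rpow, mul_one, ← Real.rpow_natCast σ 2, ← Real.rpow_mul hσ.le]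
          norm_num
  -- ‖Gbar - M‖ ≤ C * ∫ ‖g i‖
  have hint_norm_g : Integrable (fun i => ‖g i‖) μ := (hgint w).norm
  have hdiffbound : ‖Gbar - M‖ ≤ C * ∫ i, ‖g i‖ ∂μ := by
    have hsub : Gbar - M = ∫ i, (g i - metaGrad α N (l i) (l i) w) ∂μ := by
      rw [hGbar, hM, integral_sub (hgint w) (hGint w)]
    calc ‖Gbar - M‖ ≤ ∫ i, ‖g i - metaGrad α N (l i) (l i) w‖ ∂μ := by
          rw [hsub]; exact norm_integral_le_integral_norm _
      _ ≤ ∫ i, C * ‖g i‖ ∂μ :=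
          integral_mono ((hgint w).sub (hGint w)).norm (hint_norm_g.const_mul C) hptwise
      _ = C * ∫ i, ‖g i‖ ∂μ := integral_const_mul C _
  -- ∫ ‖g i‖ ≤ σ + ‖Gbar‖
  have hmean : (∫ i, ‖g i‖ ∂μ) ≤ σ + ‖Gbar‖ := by
    have hint_h : Integrable (fun i => ‖g i - Gbar‖) μ :=
      ((hgint w).sub (integrable_const Gbar)).norm
    have h1 : (∫ i, ‖g i‖ ∂μ) ≤ ∫ i, (‖g i - Gbar‖ + ‖Gbar‖) ∂μ := by
      refine integral_mono hint_norm_g (hint_h.add (integrable_const _)) ?_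
      intro i
      calc ‖g i‖ = ‖(g i - Gbar) + Gbar‖ := by rw [sub_add_cancel]
        _ ≤ ‖g i - Gbar‖ + ‖Gbar‖ := norm_add_le _ _
    have h2 : (∫ i, (‖g i - Gbar‖ + ‖Gbar‖) ∂μ)
        = (∫ i, ‖g i - Gbar‖ ∂μ) + ‖Gbar‖ := by
      rw [integral_add hint_h (integrable_const _), integral_const]
      simp
    linarith [hCS]
  -- conclude
  have htri : ‖Gbar‖ ≤ ‖M‖ + ‖Gbar - M‖ := by
    calc ‖Gbar‖ = ‖M + (Gbar - M)‖ := by rw [add_sub_cancel]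
      _ ≤ ‖M‖ + ‖Gbar - M‖ := norm_add_le _ _
  have hint_g_nonneg : (0:ℝ) ≤ ∫ i, ‖g i‖ ∂μ := integral_nonneg fun i => norm_nonneg _
  have hkey : ‖Gbar‖ * (1 - C) ≤ ‖M‖ + C * σ := by
    have h3 : ‖Gbar - M‖ ≤ C * (σ + ‖Gbar‖) := by
      calc ‖Gbar - M‖ ≤ C * ∫ i, ‖g i‖ ∂μ := hdiffbound
        _ ≤ C * (σ + ‖Gbar‖) := mul_le_mul_of_nonneg_left hmean hC0
    nlinarith
  calc ‖Gbar‖ ≤ (‖M‖ + C * σ) / (1 - C) := by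
        rw [le_div_iff₀ hCpos]; exact hkey
    _ = (1 / (1 - C)) * ‖M‖ + (C / (1 - C)) * σ := by ring
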